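/- arXiv:0710.5827 — 3 statements merged into one kernel-verified Lean document; each statement's English description precedes it below -/
import Mathlib

section
/- The composition of an ε-non-entangling map with a δ-non-entangling map is an (ε + δ + εδ)-non-entangling map. -/
open Matrix Kronecker ComplexOrder

noncomputable section

def IsState {n : Type*} [Fintype n] (ρ : Matrix n n ℂ) : Prop :=
  ρ.PosSemidef ∧ ρ.trace = 1

def SepState {α β : Type*} [Fintype α] [Fintype β]
    (σ : Matrix (α × β) (α × β) ℂ) : Prop :=
  ∃ (k : ℕ) (p : Fin k → ℝ) (A : Fin k → Matrix α α ℂ) (B : Fin k → Matrix β β ℂ),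
    (∀ i, 0 ≤ p i) ∧ (∑ i, p i = 1) ∧ (∀ i, IsState (A i)) ∧ (∀ i, IsState (B i)) ∧
    σ = ∑ i, (p i : ℂ) • (A i ⊗ₖ B i)

/-- Global robustness of entanglement. -/
def RG {α β : Type*} [Fintype α] [Fintype β] (ρ : Matrix (α × β) (α × β) ℂ) : ℝ :=
  sInf {s : ℝ | 0 ≤ s ∧ ∃ π : Matrix (α × β) (α × β) ℂ, IsState π ∧
    SepState ((((1 + s)⁻¹ : ℝ) : ℂ) • (ρ + (s : ℂ) • π))}

/-- Log-global robustness (log base 2). -/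
def LRG {α β : Type*} [Fintype α] [Fintype β] (ρ : Matrix (α × β) (α × β) ℂ) : ℝ :=
  Real.logb 2 (1 + RG ρ)

/-- Matrix logarithm (base 2) of a Hermitian matrix, via the spectral decomposition. -/
def matLog {n : Type*} [Fintype n] [DecidableEq n] (A : Matrix n n ℂ) : Matrix n n ℂ :=
  if hA : A.IsHermitian then
    (hA.eigenvectorUnitary : Matrix n n ℂ) *
      Matrix.diagonal (fun i => (Real.logb 2 (hA.eigenvalues i) : ℂ)) *
      (star hA.eigenvectorUnitary : Matrix n n ℂ)
  else 0

/-- Quantum relative entropy S(ρ‖σ) = tr ρ (log ρ − log σ). -/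
def relEnt {n : Type*} [Fintype n] [DecidableEq n] (ρ σ : Matrix n n ℂ) : ℝ :=
  ((ρ * (matLog ρ - matLog σ)).trace).re

/-- Relative entropy of entanglement. -/
def ER {α β : Type*} [Fintype α] [Fintype β] [DecidableEq α] [DecidableEq β]
    (ρ : Matrix (α × β) (α × β) ℂ) : ℝ :=
  sInf {x : ℝ | ∃ σ, IsState σ ∧ SepState σ ∧ x = relEnt ρ σ}

/-- CPTP maps, presented by Kraus operators. -/
def IsCPTP {n m : Type*} [Fintype n] [DecidableEq n] [Fintype m] [DecidableEq m]
    (Λ : Matrix n n ℂ →ₗ[ℂ] Matrix m m ℂ) : Prop :=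
  ∃ (k : ℕ) (K : Fin k → Matrix m n ℂ),
    (∀ X, Λ X = ∑ i, K i * X * (K i)ᴴ) ∧ (∑ i, (K i)ᴴ * K i = 1)

/-- Maximally entangled state on α ⊗ α. -/
def maxEnt (α : Type*) [Fintype α] [DecidableEq α] : Matrix (α × α) (α × α) ℂ :=
  Matrix.of fun p q => if p.1 = p.2 ∧ q.1 = q.2 then ((Fintype.card α : ℂ))⁻¹ else 0

/-- Trace of the positive part of a Hermitian matrix. -/
def trPos {n : Type*} [Fintype n] [DecidableEq n] (A : Matrix n n ℂ) : ℝ :=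
  if hA : A.IsHermitian then ∑ i, max (hA.eigenvalues i) 0 else 0

/-- Trace norm. -/
def traceNorm {n : Type*} [Fintype n] [DecidableEq n] (A : Matrix n n ℂ) : ℝ :=
  ∑ i, Real.sqrt ((Matrix.posSemidef_conjTranspose_mul_self A).1.eigenvalues i)


set_option linter.unnecessarySeqFocus false
set_option linter.unusedVariables false
set_option maxHeartbeats 1000000


lemma aux_kron_conjT {α β : Type*} [Fintype α] [Fintype β]
    (A : Matrix α α ℂ) (B : Matrix β β ℂ) : (A ⊗ₖ B)ᴴ = Aᴴ ⊗ₖ Bᴴ := by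
  ext p q
  simp [Matrix.conjTranspose_apply, Matrix.kroneckerMap_apply, star_mul']

lemma aux_psd_smul_real {n : Type*} [Fintype n] {M : Matrix n n ℂ} (hM : M.PosSemidef)
    {c : ℝ} (hc : 0 ≤ c) : ((c : ℂ) • M).PosSemidef := by
  refine posSemidef_iff_dotProduct_mulVec.mpr ⟨?_, ?_⟩
  · unfold Matrix.IsHermitian
    rw [Matrix.conjTranspose_smul, hM.1.eq]
    simp [Complex.star_def]
  · intro x
    rw [Matrix.smul_mulVec, dotProduct_smul, smul_eq_mul]
    exact mul_nonneg (by exact_mod_cast Complex.zero_le_real.mpr hc) (hM.dotProduct_mulVec_nonneg x)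

lemma aux_psd_sum {n ι : Type*} [Fintype n] (s : Finset ι) (f : ι → Matrix n n ℂ)
    (h : ∀ i ∈ s, (f i).PosSemidef) : (∑ i ∈ s, f i).PosSemidef :=
  Finset.sum_induction f _ (fun _ _ ha hb => ha.add hb) Matrix.PosSemidef.zero h

lemma aux_psd_vecMulVec {n : Type*} [Fintype n] (u : n → ℂ) :
    (Matrix.vecMulVec u (star u)).PosSemidef := by
  refine posSemidef_iff_dotProduct_mulVec.mpr ⟨?_, ?_⟩
  · ext x y
    simp [Matrix.conjTranspose_apply, Matrix.vecMulVec_apply, mul_comm]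
  · intro x
    have h : star x ⬝ᵥ (Matrix.vecMulVec u (star u) *ᵥ x)
        = star (star u ⬝ᵥ x) * (star u ⬝ᵥ x) := by
      simp only [Matrix.mulVec, dotProduct, Matrix.vecMulVec_apply, star_sum,
        star_mul', star_star, Pi.star_apply, Finset.mul_sum, Finset.sum_mul]
      rw [Finset.sum_comm]
      exact Finset.sum_congr rfl fun i _ => Finset.sum_congr rfl fun j _ => by ring
    rw [h]
    exact star_mul_self_nonneg _

lemma aux_psd_kron {α β : Type*} [Fintype α] [Fintype β] [DecidableEq α] [DecidableEq β]
    {A : Matrix α α ℂ} {B : Matrix β β ℂ} (hA : A.PosSemidef) (hB : B.PosSemidef) :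
    (A ⊗ₖ B).PosSemidef := by
  exact hA.kronecker hB

def aux_uvec {α : Type*} [DecidableEq α] (a a' : α) (k : Fin 4) : α → ℂ :=
  fun x => (if x = a then 1 else 0) + Complex.I ^ (k : ℕ) * (if x = a' then 1 else 0)

def aux_PV {α : Type*} [Fintype α] [DecidableEq α] (a a' : α) (k : Fin 4) : Matrix α α ℂ :=
  Matrix.vecMulVec (aux_uvec a a' k) (star (aux_uvec a a' k))

lemma aux_claimA {α : Type*} [Fintype α] [DecidableEq α] (a a' : α) :
    ∑ k : Fin 4, (Complex.I ^ (k : ℕ)) • aux_PV a a' k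
      = (4 : ℂ) • Matrix.single a a' 1 := by
  ext x y
  simp only [Matrix.sum_apply, Matrix.smul_apply, aux_PV, Matrix.vecMulVec_apply,
    Pi.star_apply, aux_uvec, Fin.sum_univ_four, Fin.val_zero, Fin.val_one, Fin.val_two,
    pow_zero, pow_one, Matrix.single, Matrix.of_apply, smul_eq_mul]
  have e3 : ((3 : Fin 4) : ℕ) = 3 := rfl
  have hI2 : Complex.I ^ (2:ℕ) = -1 := Complex.I_sq
  have hI3 : Complex.I ^ (3:ℕ) = -Complex.I := by
    rw [show (3:ℕ) = 2 + 1 from rfl, pow_add, hI2]; ring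
  have hI4 : Complex.I ^ (4:ℕ) = 1 := by
    rw [show (4:ℕ) = 2 + 2 from rfl, pow_add, hI2]; ring
  have hI6 : Complex.I ^ (6:ℕ) = -1 := by
    rw [show (6:ℕ) = 2 + 2 + 2 from rfl, pow_add, pow_add, hI2]; ring
  have hI9 : Complex.I ^ (9:ℕ) = Complex.I := by
    rw [show (9:ℕ) = 2 + 2 + 2 + 2 + 1 from rfl, pow_add, pow_add, pow_add, pow_add, hI2]; ring
  simp only [e3]
  norm_num [star_add, star_mul', Complex.star_def, Complex.conj_I]
  split_ifs <;> (try subst_vars) <;> (try (exfalso; tauto)) <;>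
    simp only [Complex.conj_I, map_neg, map_one, map_zero] <;> ring_nf <;> simp only [hI2, hI3, hI4] <;> ring_nf

def aux_tV {α : Type*} [Fintype α] [DecidableEq α] (a a' : α) (k : Fin 4) : ℝ :=
  ∑ x, Complex.normSq (aux_uvec a a' k x)

lemma aux_trace_PV {α : Type*} [Fintype α] [DecidableEq α] (a a' : α) (k : Fin 4) :
    (aux_PV a a' k).trace = (aux_tV a a' k : ℂ) := by
  rw [Matrix.trace]
  push_cast [aux_tV]
  refine Finset.sum_congr rfl fun x _ => ?_
  rw [Matrix.diag_apply, aux_PV, Matrix.vecMulVec_apply, Pi.star_apply, Complex.star_def,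
    Complex.mul_conj]

lemma aux_tV_nonneg {α : Type*} [Fintype α] [DecidableEq α] (a a' : α) (k : Fin 4) :
    0 ≤ aux_tV a a' k :=
  Finset.sum_nonneg fun x _ => Complex.normSq_nonneg _

lemma aux_PV_zero {α : Type*} [Fintype α] [DecidableEq α] {a a' : α} {k : Fin 4}
    (h : aux_tV a a' k = 0) : aux_PV a a' k = 0 := by
  have hz : ∀ x, aux_uvec a a' k x = 0 := by
    intro x
    have := (Finset.sum_eq_zero_iff_of_nonneg
      (fun x _ => Complex.normSq_nonneg (aux_uvec a a' k x))).mp h x (Finset.mem_univ x)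
    exact Complex.normSq_eq_zero.mp this
  ext x y
  simp [aux_PV, Matrix.vecMulVec_apply, hz]

lemma aux_psd_PV {α : Type*} [Fintype α] [DecidableEq α] (a a' : α) (k : Fin 4) :
    (aux_PV a a' k).PosSemidef := aux_psd_vecMulVec _

/-- bilinearity of kronecker for smul-sums -/
lemma aux_sum_kron {α β ι κ : Type*} [Fintype α] [Fintype β] [Fintype ι] [Fintype κ]
    (c : ι → ℂ) (d : κ → ℂ) (A : ι → Matrix α α ℂ) (B : κ → Matrix β β ℂ) :
    ((∑ k, c k • A k) ⊗ₖ (∑ l, d l • B l)) = ∑ k, ∑ l, (c k * d l) • (A k ⊗ₖ B l) := by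
  ext p q
  simp only [Matrix.kroneckerMap_apply, Matrix.sum_apply, Matrix.smul_apply, smul_eq_mul,
    Finset.sum_mul, Finset.mul_sum]
  rw [Finset.sum_comm]
  exact Finset.sum_congr rfl fun k _ => Finset.sum_congr rfl fun l _ => by ring

section BigDecomp
variable {α β : Type*} [Fintype α] [DecidableEq α] [Fintype β] [DecidableEq β]

def aux_PP (j : (α × α × Fin 4) × (β × β × Fin 4)) : Matrix (α × β) (α × β) ℂ :=
  aux_PV j.1.1 j.1.2.1 j.1.2.2 ⊗ₖ aux_PV j.2.1 j.2.2.1 j.2.2.2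

def aux_zc (ρ : Matrix (α × β) (α × β) ℂ) (j : (α × α × Fin 4) × (β × β × Fin 4)) : ℂ :=
  (16 : ℂ)⁻¹ * (Complex.I ^ (j.1.2.2 : ℕ) * Complex.I ^ (j.2.2.2 : ℕ) *
    ρ (j.1.1, j.2.1) (j.1.2.1, j.2.2.1))

def aux_tP (j : (α × α × Fin 4) × (β × β × Fin 4)) : ℝ :=
  aux_tV j.1.1 j.1.2.1 j.1.2.2 * aux_tV j.2.1 j.2.2.1 j.2.2.2

lemma aux_trace_PP (j : (α × α × Fin 4) × (β × β × Fin 4)) :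
    (aux_PP j).trace = (aux_tP j : ℂ) := by
  rw [aux_PP, Matrix.trace_kronecker, aux_trace_PV, aux_trace_PV, aux_tP]
  push_cast
  ring

lemma aux_psd_PP (j : (α × α × Fin 4) × (β × β × Fin 4)) : (aux_PP j).PosSemidef :=
  aux_psd_kron (aux_psd_PV _ _ _) (aux_psd_PV _ _ _)

lemma aux_tP_nonneg (j : (α × α × Fin 4) × (β × β × Fin 4)) : 0 ≤ aux_tP j :=
  mul_nonneg (aux_tV_nonneg _ _ _) (aux_tV_nonneg _ _ _)

lemma aux_PP_zero {j : (α × α × Fin 4) × (β × β × Fin 4)} (h : aux_tP j = 0) :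
    aux_PP j = 0 := by
  rcases mul_eq_zero.mp h with h' | h'
  · rw [aux_PP, aux_PV_zero h', Matrix.zero_kronecker]
  · rw [aux_PP, aux_PV_zero h', Matrix.kronecker_zero]

lemma aux_PP_herm (j : (α × α × Fin 4) × (β × β × Fin 4)) : (aux_PP j)ᴴ = aux_PP j := by
  rw [aux_PP, aux_kron_conjT]
  rw [(aux_psd_PV j.1.1 j.1.2.1 j.1.2.2).1, (aux_psd_PV j.2.1 j.2.2.1 j.2.2.2).1]

lemma aux_swap3 {M γ1 γ2 γ3 : Type*} [AddCommMonoid M] [Fintype γ1] [Fintype γ2] [Fintype γ3]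
    (g : γ1 → γ2 → γ3 → M) :
    ∑ k : γ1, ∑ b : γ2, ∑ b' : γ3, g k b b' = ∑ b : γ2, ∑ b' : γ3, ∑ k : γ1, g k b b' := by
  rw [Finset.sum_comm]
  exact Finset.sum_congr rfl fun b _ => Finset.sum_comm

lemma aux_basis_expand (ρ : Matrix (α × β) (α × β) ℂ) :
    ρ = ∑ a : α, ∑ a' : α, ∑ b : β, ∑ b' : β, ρ (a, b) (a', b') •
      (Matrix.single a a' (1 : ℂ) ⊗ₖ Matrix.single b b' (1 : ℂ)) := by
  ext ⟨x1, x2⟩ ⟨y1, y2⟩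
  simp [Matrix.sum_apply, Matrix.single, Matrix.of_apply,
    Matrix.kroneckerMap_apply, ite_and, mul_ite, ite_mul, Finset.sum_ite_eq,
    Finset.sum_ite_eq']

lemma aux_kron16 (a a' : α) (b b' : β) :
    ∑ k : Fin 4, ∑ l : Fin 4, (Complex.I ^ (k : ℕ) * Complex.I ^ (l : ℕ)) •
        (aux_PV a a' k ⊗ₖ aux_PV b b' l)
      = (16 : ℂ) • (Matrix.single a a' (1 : ℂ) ⊗ₖ Matrix.single b b' (1 : ℂ)) := by
  rw [← aux_sum_kron, aux_claimA, aux_claimA, Matrix.smul_kronecker, Matrix.kronecker_smul,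
    smul_smul]
  norm_num

lemma aux_claimB (ρ : Matrix (α × β) (α × β) ℂ) :
    ρ = ∑ j : (α × α × Fin 4) × (β × β × Fin 4), aux_zc ρ j • aux_PP j := by
  have h1 : ∑ j : (α × α × Fin 4) × (β × β × Fin 4), aux_zc ρ j • aux_PP j
      = ∑ a : α, ∑ a' : α, ∑ k : Fin 4, ∑ b : β, ∑ b' : β, ∑ l : Fin 4,
        ((16 : ℂ)⁻¹ * (Complex.I ^ (k : ℕ) * Complex.I ^ (l : ℕ) * ρ (a, b) (a', b'))) •
          (aux_PV a a' k ⊗ₖ aux_PV b b' l) := by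
    simp_rw [Fintype.sum_prod_type]
    rfl
  have h2 : ∀ (a a' : α),
      (∑ k : Fin 4, ∑ b : β, ∑ b' : β, ∑ l : Fin 4,
        ((16 : ℂ)⁻¹ * (Complex.I ^ (k : ℕ) * Complex.I ^ (l : ℕ) * ρ (a, b) (a', b'))) •
          (aux_PV a a' k ⊗ₖ aux_PV b b' l))
      = ∑ b : β, ∑ b' : β, ∑ k : Fin 4, ∑ l : Fin 4,
        ((16 : ℂ)⁻¹ * (Complex.I ^ (k : ℕ) * Complex.I ^ (l : ℕ) * ρ (a, b) (a', b'))) •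
          (aux_PV a a' k ⊗ₖ aux_PV b b' l) := fun a a' =>
    aux_swap3 (fun (k : Fin 4) (b b' : β) => ∑ l : Fin 4,
        ((16 : ℂ)⁻¹ * (Complex.I ^ (k : ℕ) * Complex.I ^ (l : ℕ) * ρ (a, b) (a', b'))) •
          (aux_PV a a' k ⊗ₖ aux_PV b b' l))
  have h3 : ∀ (a a' : α) (b b' : β),
      (∑ k : Fin 4, ∑ l : Fin 4,
        ((16 : ℂ)⁻¹ * (Complex.I ^ (k : ℕ) * Complex.I ^ (l : ℕ) * ρ (a, b) (a', b'))) •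
          (aux_PV a a' k ⊗ₖ aux_PV b b' l))
      = ρ (a, b) (a', b') •
          (Matrix.single a a' (1 : ℂ) ⊗ₖ Matrix.single b b' (1 : ℂ)) := by
    intro a a' b b'
    have hterm : ∀ k l : Fin 4,
        ((16 : ℂ)⁻¹ * (Complex.I ^ (k : ℕ) * Complex.I ^ (l : ℕ) * ρ (a, b) (a', b'))) •
          (aux_PV a a' k ⊗ₖ aux_PV b b' l)
        = ((16 : ℂ)⁻¹ * ρ (a, b) (a', b')) •
            ((Complex.I ^ (k : ℕ) * Complex.I ^ (l : ℕ)) • (aux_PV a a' k ⊗ₖ aux_PV b b' l)) := by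
      intro k l
      rw [smul_smul]
      congr 1
      ring
    simp_rw [hterm, ← Finset.smul_sum]
    rw [aux_kron16, smul_smul]
    congr 1
    ring
  rw [h1]
  simp_rw [h2, h3]
  exact aux_basis_expand ρ
end BigDecomp

def aux_dflt (α : Type*) [Fintype α] [DecidableEq α] : Matrix α α ℂ := (Complex.ofReal ((Fintype.card α : ℝ)⁻¹)) • 1

lemma aux_isState_dflt {α : Type*} [Fintype α] [DecidableEq α] [Nonempty α] :
    IsState (aux_dflt α) := by
  refine ⟨?_, ?_⟩
  · rw [aux_dflt]
    exact aux_psd_smul_real (Matrix.PosSemidef.one : (1 : Matrix α α ℂ).PosSemidef) (inv_nonneg.mpr (Nat.cast_nonneg (Fintype.card α)))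
  · rw [aux_dflt, Matrix.trace_smul, smul_eq_mul, Matrix.trace_one]
    push_cast
    exact inv_mul_cancel₀ (Nat.cast_ne_zero.mpr Fintype.card_ne_zero)

lemma aux_sepNormalize {α β J : Type*} [Fintype α] [DecidableEq α] [Fintype β] [DecidableEq β]
    [Fintype J] [Nonempty α] [Nonempty β]
    (w ta tb : J → ℝ) (Qa : J → Matrix α α ℂ) (Qb : J → Matrix β β ℂ)
    (hw : ∀ j, 0 ≤ w j) (hQa : ∀ j, (Qa j).PosSemidef) (hQb : ∀ j, (Qb j).PosSemidef)
    (hta : ∀ j, (Qa j).trace = (ta j : ℂ)) (htb : ∀ j, (Qb j).trace = (tb j : ℂ))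
    (htan : ∀ j, 0 ≤ ta j) (htbn : ∀ j, 0 ≤ tb j)
    (hta0 : ∀ j, ta j = 0 → Qa j = 0) (htb0 : ∀ j, tb j = 0 → Qb j = 0)
    (hsum : ∑ j, w j * (ta j * tb j) = 1) :
    SepState (∑ j, ((w j : ℝ) : ℂ) • (Qa j ⊗ₖ Qb j)) := by
  classical
  set e := (Fintype.equivFin J).symm with he
  refine ⟨Fintype.card J, fun i => w (e i) * (ta (e i) * tb (e i)),
    fun i => if ta (e i) = 0 then aux_dflt α
      else (((ta (e i))⁻¹ : ℝ) : ℂ) • Qa (e i),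
    fun i => if tb (e i) = 0 then aux_dflt β
      else (((tb (e i))⁻¹ : ℝ) : ℂ) • Qb (e i),
    fun i => mul_nonneg (hw _) (mul_nonneg (htan _) (htbn _)), ?_, ?_, ?_, ?_⟩
  · rw [Equiv.sum_comp e (fun j => w j * (ta j * tb j))]
    exact hsum
  · intro i
    dsimp only
    split_ifs with h
    · exact aux_isState_dflt
    · refine ⟨aux_psd_smul_real (hQa _) (inv_nonneg.mpr (htan _)), ?_⟩
      rw [Matrix.trace_smul, smul_eq_mul, hta, ← Complex.ofReal_mul, inv_mul_cancel₀ h]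
      simp
  · intro i
    dsimp only
    split_ifs with h
    · exact aux_isState_dflt
    · refine ⟨aux_psd_smul_real (hQb _) (inv_nonneg.mpr (htbn _)), ?_⟩
      rw [Matrix.trace_smul, smul_eq_mul, htb, ← Complex.ofReal_mul, inv_mul_cancel₀ h]
      simp
  · dsimp only
    refine (Fintype.sum_equiv e _ _ fun i => ?_).symm
    set j := e i with hj
    by_cases h1 : ta j = 0
    · rw [hta0 j h1]
      simp [h1]
    · by_cases h2 : tb j = 0
      · rw [htb0 j h2]
        simp [h2]
      · rw [if_neg h1, if_neg h2, Matrix.smul_kronecker, Matrix.kronecker_smul,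
          smul_smul, smul_smul]
        congr 1
        push_cast
        field_simp

lemma aux_sep_isState {α β : Type*} [Fintype α] [Fintype β] [DecidableEq α] [DecidableEq β]
    {σ : Matrix (α × β) (α × β) ℂ} (h : SepState σ) : IsState σ := by
  obtain ⟨k, p, A, B, hp, hps, hA, hB, rfl⟩ := h
  refine ⟨aux_psd_sum _ _ fun i _ =>
    aux_psd_smul_real (aux_psd_kron (hA i).1 (hB i).1) (hp i), ?_⟩
  rw [Matrix.trace_sum]
  have hterm : ∀ i, ((p i : ℂ) • (A i ⊗ₖ B i)).trace = (p i : ℂ) := fun i => by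
    rw [Matrix.trace_smul, Matrix.trace_kronecker, (hA i).2, (hB i).2, smul_eq_mul,
      mul_one, mul_one]
  simp_rw [hterm]
  rw [← Complex.ofReal_sum, hps, Complex.ofReal_one]

lemma aux_cptp_state {n m : Type*} [Fintype n] [DecidableEq n] [Fintype m] [DecidableEq m]
    {Λ : Matrix n n ℂ →ₗ[ℂ] Matrix m m ℂ} (hΛ : IsCPTP Λ) {ρ : Matrix n n ℂ}
    (hρ : IsState ρ) : IsState (Λ ρ) := by
  obtain ⟨k, K, hK, hK1⟩ := hΛ
  rw [hK]
  refine ⟨aux_psd_sum _ _ fun i _ => hρ.1.mul_mul_conjTranspose_same (K i), ?_⟩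
  rw [Matrix.trace_sum]
  have hterm : ∀ i : Fin k, (K i * ρ * (K i)ᴴ).trace = ((K i)ᴴ * K i * ρ).trace := fun i =>
    Matrix.trace_mul_cycle (K i) ρ (K i)ᴴ
  simp_rw [hterm, ← Matrix.trace_sum, ← Finset.sum_mul, hK1, one_mul, hρ.2]

lemma aux_cptp_comp {n m p : Type*} [Fintype n] [DecidableEq n] [Fintype m] [DecidableEq m]
    [Fintype p] [DecidableEq p]
    {Λ : Matrix n n ℂ →ₗ[ℂ] Matrix m m ℂ} {Ω : Matrix m m ℂ →ₗ[ℂ] Matrix p p ℂ}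
    (hΛ : IsCPTP Λ) (hΩ : IsCPTP Ω) : IsCPTP (Ω ∘ₗ Λ) := by
  obtain ⟨k1, K1, hK1, hT1⟩ := hΛ
  obtain ⟨k2, K2, hK2, hT2⟩ := hΩ
  refine ⟨k1 * k2, fun i => K2 (finProdFinEquiv.symm i).2 * K1 (finProdFinEquiv.symm i).1,
    ?_, ?_⟩
  · intro X
    have step : (Ω ∘ₗ Λ) X = ∑ b : Fin k2, ∑ a : Fin k1,
        (K2 b * K1 a) * X * (K2 b * K1 a)ᴴ := by
      simp only [LinearMap.coe_comp, Function.comp_apply, hK1, hK2]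
      refine Finset.sum_congr rfl fun b _ => ?_
      rw [Matrix.mul_sum, Matrix.sum_mul]
      refine Finset.sum_congr rfl fun a _ => ?_
      simp [Matrix.conjTranspose_mul, Matrix.mul_assoc]
    rw [step]
    dsimp only
    rw [← Equiv.sum_comp finProdFinEquiv
      (fun i : Fin (k1 * k2) => K2 (finProdFinEquiv.symm i).2 * K1 (finProdFinEquiv.symm i).1
        * X * (K2 (finProdFinEquiv.symm i).2 * K1 (finProdFinEquiv.symm i).1)ᴴ)]
    simp only [Equiv.symm_apply_apply]
    rw [Fintype.sum_prod_type, Finset.sum_comm]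
  · have step : ∑ q : Fin k1 × Fin k2,
        (K2 q.2 * K1 q.1)ᴴ * (K2 q.2 * K1 q.1) = 1 := by
      rw [Fintype.sum_prod_type]
      have inner : ∀ a : Fin k1,
          ∑ b : Fin k2, (K2 b * K1 a)ᴴ * (K2 b * K1 a) = (K1 a)ᴴ * K1 a := by
        intro a
        have : ∀ b : Fin k2, (K2 b * K1 a)ᴴ * (K2 b * K1 a)
            = (K1 a)ᴴ * ((K2 b)ᴴ * K2 b) * K1 a := fun b => by
          rw [Matrix.conjTranspose_mul]
          simp [Matrix.mul_assoc]
        simp_rw [this]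
        rw [← Matrix.sum_mul, ← Matrix.mul_sum, hT2, Matrix.mul_one]
      simp_rw [inner, hT1]
    rw [← step]
    dsimp only
    rw [← Equiv.sum_comp finProdFinEquiv
      (fun i : Fin (k1 * k2) => (K2 (finProdFinEquiv.symm i).2 * K1 (finProdFinEquiv.symm i).1)ᴴ
        * (K2 (finProdFinEquiv.symm i).2 * K1 (finProdFinEquiv.symm i).1))]
    simp only [Equiv.symm_apply_apply]

lemma aux_rg_witness {α β : Type*} [Fintype α] [DecidableEq α] [Fintype β] [DecidableEq β]
    {ρ : Matrix (α × β) (α × β) ℂ} (hρ : IsState ρ) :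
    ∃ s : ℝ, 0 ≤ s ∧ ∃ π : Matrix (α × β) (α × β) ℂ, IsState π ∧
      SepState ((((1 + s)⁻¹ : ℝ) : ℂ) • (ρ + (s : ℂ) • π)) := by
  classical
  have hne : Nonempty (α × β) := by
    by_contra h
    rw [not_nonempty_iff] at h
    exact one_ne_zero (hρ.2.symm.trans (Matrix.trace_eq_zero_of_isEmpty ρ))
  have hNa : Nonempty α := ⟨hne.some.1⟩
  have hNb : Nonempty β := ⟨hne.some.2⟩
  have hB : ρ = ∑ j : (α × α × Fin 4) × (β × β × Fin 4), aux_zc ρ j • aux_PP j := aux_claimB ρ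
  set r : (α × α × Fin 4) × (β × β × Fin 4) → ℝ := fun j => (aux_zc ρ j).re with hr
  have hHerm : ρᴴ = ρ := hρ.1.1
  have hreal : ρ = ∑ j : (α × α × Fin 4) × (β × β × Fin 4), ((r j : ℝ) : ℂ) • aux_PP j := by
    have h2 : ρ = ∑ j : (α × α × Fin 4) × (β × β × Fin 4),
        (starRingEnd ℂ (aux_zc ρ j)) • aux_PP j := by
      conv_lhs => rw [← hHerm, hB]
      rw [Matrix.conjTranspose_sum]
      refine Finset.sum_congr rfl fun j _ => ?_
      rw [Matrix.conjTranspose_smul, aux_PP_herm]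
      rfl
    calc ρ = (2 : ℂ)⁻¹ • (ρ + ρ) := by
          rw [← two_smul ℂ ρ, smul_smul]
          norm_num
    _ = (2 : ℂ)⁻¹ • (∑ j : (α × α × Fin 4) × (β × β × Fin 4), aux_zc ρ j • aux_PP j
          + ∑ j : (α × α × Fin 4) × (β × β × Fin 4),
              (starRingEnd ℂ (aux_zc ρ j)) • aux_PP j) := by rw [← hB, ← h2]
    _ = ∑ j : (α × α × Fin 4) × (β × β × Fin 4), ((r j : ℝ) : ℂ) • aux_PP j := by
        rw [← Finset.sum_add_distrib, Finset.smul_sum]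
        refine Finset.sum_congr rfl fun j _ => ?_
        rw [← add_smul, smul_smul, Complex.add_conj]
        congr 1
        rw [hr]
        push_cast
        ring
  set pj : (α × α × Fin 4) × (β × β × Fin 4) → ℝ := fun j => max (r j) 0 with hp
  set nj : (α × α × Fin 4) × (β × β × Fin 4) → ℝ := fun j => max (-r j) 0 with hn
  have hpn : ∀ j, r j + nj j = pj j := by
    intro j
    simp only [hp, hn]
    rcases le_total (r j) 0 with h | h
    · rw [max_eq_right h, max_eq_left (by linarith)]
      ring
    · rw [max_eq_left h, max_eq_right (by linarith)]
      ring
  have hpj0 : ∀ j, 0 ≤ pj j := fun j => le_max_right _ _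
  have hnj0 : ∀ j, 0 ≤ nj j := fun j => le_max_right _ _
  set t : ℝ := ∑ j : (α × α × Fin 4) × (β × β × Fin 4), nj j * aux_tP j with ht
  have ht0 : 0 ≤ t := Finset.sum_nonneg fun j _ => mul_nonneg (hnj0 j) (aux_tP_nonneg j)
  have h1t : (0 : ℝ) < 1 + t := by linarith
  have hkey : ρ + ∑ j : (α × α × Fin 4) × (β × β × Fin 4), ((nj j : ℝ) : ℂ) • aux_PP j
      = ∑ j : (α × α × Fin 4) × (β × β × Fin 4), ((pj j : ℝ) : ℂ) • aux_PP j := by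
    conv_lhs => rw [hreal]
    rw [← Finset.sum_add_distrib]
    refine Finset.sum_congr rfl fun j _ => ?_
    rw [← add_smul]
    congr 1
    exact_mod_cast congrArg Complex.ofReal (hpn j)
  have htrM : (∑ j : (α × α × Fin 4) × (β × β × Fin 4), ((nj j : ℝ) : ℂ) • aux_PP j).trace
      = (t : ℂ) := by
    rw [Matrix.trace_sum, ht]
    push_cast
    refine Finset.sum_congr rfl fun j _ => ?_
    rw [Matrix.trace_smul, aux_trace_PP, smul_eq_mul]
  have htrP : ∑ j : (α × α × Fin 4) × (β × β × Fin 4), pj j * aux_tP j = 1 + t := by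
    have hc := congrArg Matrix.trace hkey
    rw [Matrix.trace_add, hρ.2, htrM, Matrix.trace_sum] at hc
    have h2 : ∑ j : (α × α × Fin 4) × (β × β × Fin 4), (((pj j : ℝ) : ℂ) • aux_PP j).trace
        = ((∑ j : (α × α × Fin 4) × (β × β × Fin 4), pj j * aux_tP j : ℝ) : ℂ) := by
      push_cast
      refine Finset.sum_congr rfl fun j _ => ?_
      rw [Matrix.trace_smul, aux_trace_PP, smul_eq_mul]
    rw [h2] at hc
    exact_mod_cast hc.symm
  have hsep : SepState (∑ j : (α × α × Fin 4) × (β × β × Fin 4),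
      (((1 + t)⁻¹ * pj j : ℝ) : ℂ) • aux_PP j) := by
    refine aux_sepNormalize (fun j => (1 + t)⁻¹ * pj j)
      (fun j => aux_tV j.1.1 j.1.2.1 j.1.2.2) (fun j => aux_tV j.2.1 j.2.2.1 j.2.2.2)
      (fun j => aux_PV j.1.1 j.1.2.1 j.1.2.2) (fun j => aux_PV j.2.1 j.2.2.1 j.2.2.2)
      (fun j => mul_nonneg (inv_nonneg.mpr h1t.le) (hpj0 j))
      (fun j => aux_psd_PV _ _ _) (fun j => aux_psd_PV _ _ _)
      (fun j => aux_trace_PV _ _ _) (fun j => aux_trace_PV _ _ _)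
      (fun j => aux_tV_nonneg _ _ _) (fun j => aux_tV_nonneg _ _ _)
      (fun j h => aux_PV_zero h) (fun j h => aux_PV_zero h) ?_
    have hstep : ∑ j : (α × α × Fin 4) × (β × β × Fin 4),
        (1 + t)⁻¹ * pj j * (aux_tV j.1.1 j.1.2.1 j.1.2.2 * aux_tV j.2.1 j.2.2.1 j.2.2.2)
        = (1 + t)⁻¹ * ∑ j : (α × α × Fin 4) × (β × β × Fin 4), pj j * aux_tP j := by
      rw [Finset.mul_sum]
      refine Finset.sum_congr rfl fun j _ => ?_
      rw [aux_tP]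
      ring
    rw [hstep, htrP, inv_mul_cancel₀ h1t.ne']
  by_cases hts : t = 0
  · refine ⟨0, le_refl 0, ρ, hρ, ?_⟩
    have hsum0 : ∑ j : (α × α × Fin 4) × (β × β × Fin 4), nj j * aux_tP j = 0 := by
      rw [← ht]
      exact hts
    have hzero : ∀ j : (α × α × Fin 4) × (β × β × Fin 4), ((nj j : ℝ) : ℂ) • aux_PP j = 0 := by
      intro j
      have hj : nj j * aux_tP j = 0 :=
        (Finset.sum_eq_zero_iff_of_nonneg
          (fun j _ => mul_nonneg (hnj0 j) (aux_tP_nonneg j))).mp hsum0 j (Finset.mem_univ j)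
      rcases mul_eq_zero.mp hj with h | h
      · rw [h]
        simp
      · rw [aux_PP_zero h, smul_zero]
    have hρsep : ρ = ∑ j : (α × α × Fin 4) × (β × β × Fin 4), ((pj j : ℝ) : ℂ) • aux_PP j := by
      rw [← hkey, Finset.sum_eq_zero fun j _ => hzero j, add_zero]
    have hsep0 : SepState (∑ j : (α × α × Fin 4) × (β × β × Fin 4),
        ((pj j : ℝ) : ℂ) • aux_PP j) := by
      rw [hts] at hsep
      norm_num at hsep
      exact hsep
    have hmat : ((((1 : ℝ) + 0)⁻¹ : ℝ) : ℂ) • (ρ + (((0 : ℝ) : ℂ)) • ρ) = ρ := by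
      norm_num
    rw [hmat, hρsep]
    exact hsep0
  · have htpos : 0 < t := lt_of_le_of_ne ht0 (Ne.symm hts)
    refine ⟨t, ht0, ((t⁻¹ : ℝ) : ℂ) •
      ∑ j : (α × α × Fin 4) × (β × β × Fin 4), ((nj j : ℝ) : ℂ) • aux_PP j, ⟨?_, ?_⟩, ?_⟩
    · exact aux_psd_smul_real (aux_psd_sum _ _ fun j _ =>
        aux_psd_smul_real (aux_psd_PP j) (hnj0 j)) (inv_nonneg.mpr ht0)
    · rw [Matrix.trace_smul, htrM, smul_eq_mul, ← Complex.ofReal_mul, inv_mul_cancel₀ hts,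
        Complex.ofReal_one]
    · have hmat : (((1 + t)⁻¹ : ℝ) : ℂ) • (ρ + (t : ℂ) • (((t⁻¹ : ℝ) : ℂ) •
          ∑ j : (α × α × Fin 4) × (β × β × Fin 4), ((nj j : ℝ) : ℂ) • aux_PP j))
          = ∑ j : (α × α × Fin 4) × (β × β × Fin 4),
              (((1 + t)⁻¹ * pj j : ℝ) : ℂ) • aux_PP j := by
        rw [smul_smul, ← Complex.ofReal_mul, mul_inv_cancel₀ hts, Complex.ofReal_one, one_smul,
          hkey, Finset.smul_sum]
        refine Finset.sum_congr rfl fun j _ => ?_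
        rw [smul_smul]
        congr 1
        push_cast
        ring
      rw [hmat]
      exact hsep

/-- composing a δ-non-entangling map with an ε-non-entangling map yields
an (ε + δ + εδ)-non-entangling map. -/
theorem stmt_5 {α β γ δ' κ μ : Type*}
    [Fintype α] [DecidableEq α] [Fintype β] [DecidableEq β]
    [Fintype γ] [DecidableEq γ] [Fintype δ'] [DecidableEq δ']
    [Fintype κ] [DecidableEq κ] [Fintype μ] [DecidableEq μ]
    (ε d : ℝ) (hε : 0 ≤ ε) (hd : 0 ≤ d)
    (Λ : Matrix (α × β) (α × β) ℂ →ₗ[ℂ] Matrix (γ × δ') (γ × δ') ℂ)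
    (Ω : Matrix (γ × δ') (γ × δ') ℂ →ₗ[ℂ] Matrix (κ × μ) (κ × μ) ℂ)
    (hΛ : IsCPTP Λ) (hΩ : IsCPTP Ω)
    (hΛNE : ∀ σ, IsState σ → SepState σ → RG (Λ σ) ≤ d)
    (hΩNE : ∀ σ, IsState σ → SepState σ → RG (Ω σ) ≤ ε) :
    IsCPTP (Ω ∘ₗ Λ) ∧
    ∀ σ, IsState σ → SepState σ → RG ((Ω ∘ₗ Λ) σ) ≤ ε + d + ε * d := by

  refine ⟨aux_cptp_comp hΛ hΩ, ?_⟩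
  intro σ hσS hσsep
  have hΛσ : IsState (Λ σ) := aux_cptp_state hΛ hσS
  refine le_of_forall_pos_le_add fun η0 hη0 => ?_
  have h3pos : (0 : ℝ) < 3 + ε + d := by linarith
  set η := min 1 (η0 / (3 + ε + d)) with hη
  have hηpos : 0 < η := lt_min one_pos (div_pos hη0 h3pos)
  have hη1 : η ≤ 1 := min_le_left _ _
  have hη3 : η * (3 + ε + d) ≤ η0 := (le_div_iff₀ h3pos).mp (min_le_right _ _)
  -- step 1 : extract a witness for Λ σ
  have hne1 : {s : ℝ | 0 ≤ s ∧ ∃ π : Matrix (γ × δ') (γ × δ') ℂ, IsState π ∧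
      SepState ((((1 + s)⁻¹ : ℝ) : ℂ) • (Λ σ + (s : ℂ) • π))}.Nonempty := by
    obtain ⟨s, h1, π, h2, h3⟩ := aux_rg_witness hΛσ
    exact ⟨s, h1, π, h2, h3⟩
  have hbdd1 : BddBelow {s : ℝ | 0 ≤ s ∧ ∃ π : Matrix (γ × δ') (γ × δ') ℂ, IsState π ∧
      SepState ((((1 + s)⁻¹ : ℝ) : ℂ) • (Λ σ + (s : ℂ) • π))} := ⟨0, fun x hx => hx.1⟩
  have hlt1 : RG (Λ σ) < d + η := lt_of_le_of_lt (hΛNE σ hσS hσsep) (by linarith)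
  rw [RG] at hlt1
  obtain ⟨s, hsmem, hslt⟩ := (csInf_lt_iff hbdd1 hne1).mp hlt1
  obtain ⟨hs0, π, hπ, hsepτ⟩ := hsmem
  set τ := (((1 + s)⁻¹ : ℝ) : ℂ) • (Λ σ + (s : ℂ) • π) with hτdef
  have hτstate : IsState τ := aux_sep_isState hsepτ
  have hΩτ : IsState (Ω τ) := aux_cptp_state hΩ hτstate
  -- step 2 : extract a witness for Ω τ
  have hne2 : {s : ℝ | 0 ≤ s ∧ ∃ π : Matrix (κ × μ) (κ × μ) ℂ, IsState π ∧
      SepState ((((1 + s)⁻¹ : ℝ) : ℂ) • (Ω τ + (s : ℂ) • π))}.Nonempty := by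
    obtain ⟨s, h1, π, h2, h3⟩ := aux_rg_witness hΩτ
    exact ⟨s, h1, π, h2, h3⟩
  have hbdd2 : BddBelow {s : ℝ | 0 ≤ s ∧ ∃ π : Matrix (κ × μ) (κ × μ) ℂ, IsState π ∧
      SepState ((((1 + s)⁻¹ : ℝ) : ℂ) • (Ω τ + (s : ℂ) • π))} := ⟨0, fun x hx => hx.1⟩
  have hlt2 : RG (Ω τ) < ε + η := lt_of_le_of_lt (hΩNE τ hτstate hsepτ) (by linarith)
  rw [RG] at hlt2
  obtain ⟨s', hs'mem, hs'lt⟩ := (csInf_lt_iff hbdd2 hne2).mp hlt2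
  obtain ⟨hs'0, π', hπ', hsep'⟩ := hs'mem
  have hΩπ : IsState (Ω π) := aux_cptp_state hΩ hπ
  have h1s : (0 : ℝ) < 1 + s := by linarith
  have h1s' : (0 : ℝ) < 1 + s' := by linarith
  have hΩτeq : Ω τ = (((1 + s)⁻¹ : ℝ) : ℂ) • ((Ω ∘ₗ Λ) σ + (s : ℂ) • Ω π) := by
    rw [hτdef]
    simp only [_root_.map_smul, _root_.map_add]
    rfl
  have hfinal : RG ((Ω ∘ₗ Λ) σ) ≤ s + s' + s * s' := by
    have hs''0 : (0 : ℝ) ≤ s + s' + s * s' := by nlinarith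
    by_cases hz : s + s' + s * s' = 0
    · have hseq : s = 0 := by nlinarith
      have hs'eq : s' = 0 := by nlinarith
      subst hseq
      subst hs'eq
      rw [RG]
      refine csInf_le ⟨0, fun x hx => hx.1⟩ ⟨hs''0, π', hπ', ?_⟩
      norm_num at hΩτeq hsep' ⊢
      rw [← hΩτeq]
      exact hsep'
    · have hs''pos : (0 : ℝ) < s + s' + s * s' := lt_of_le_of_ne hs''0 (Ne.symm hz)
      have h1s'' : (0 : ℝ) < 1 + (s + s' + s * s') := by linarith
      set w1 : ℝ := s / (s + s' + s * s') with hw1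
      set w2 : ℝ := s' * (1 + s) / (s + s' + s * s') with hw2
      have hw10 : 0 ≤ w1 := div_nonneg hs0 hs''0
      have hw20 : 0 ≤ w2 := div_nonneg (mul_nonneg hs'0 h1s.le) hs''0
      have hw12 : w1 + w2 = 1 := by
        rw [hw1, hw2]
        field_simp
        ring
      have hπ''state : IsState (((w1 : ℝ) : ℂ) • Ω π + ((w2 : ℝ) : ℂ) • π') := by
        constructor
        · exact (aux_psd_smul_real hΩπ.1 hw10).add (aux_psd_smul_real hπ'.1 hw20)
        · rw [Matrix.trace_add, Matrix.trace_smul, Matrix.trace_smul, hΩπ.2, hπ'.2,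
            smul_eq_mul, smul_eq_mul, mul_one, mul_one, ← Complex.ofReal_add, hw12,
            Complex.ofReal_one]
      have hcs : ((1 : ℂ) + s) ≠ 0 := by
        have : ((1 + s : ℝ) : ℂ) ≠ 0 := Complex.ofReal_ne_zero.mpr h1s.ne'
        push_cast at this
        exact this
      have hcz : ((s : ℂ) + s' + s * s') ≠ 0 := by
        have : ((s + s' + s * s' : ℝ) : ℂ) ≠ 0 := Complex.ofReal_ne_zero.mpr hz
        push_cast at this
        exact this
      have hmat : (((1 + (s + s' + s * s'))⁻¹ : ℝ) : ℂ) •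
            ((Ω ∘ₗ Λ) σ + ((s + s' + s * s' : ℝ) : ℂ) •
              (((w1 : ℝ) : ℂ) • Ω π + ((w2 : ℝ) : ℂ) • π'))
          = (((1 + s')⁻¹ : ℝ) : ℂ) • (Ω τ + (s' : ℂ) • π') := by
        rw [hΩτeq, hw1, hw2]
        push_cast
        match_scalars <;> (try field_simp) <;> (try ring) <;> (try tauto)
      rw [RG]
      refine csInf_le ⟨0, fun x hx => hx.1⟩
        ⟨hs''0, ((w1 : ℝ) : ℂ) • Ω π + ((w2 : ℝ) : ℂ) • π', hπ''state, ?_⟩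
      rw [show (((s + s' + s * s' : ℝ)) : ℂ) = ((s + s' + s * s' : ℝ) : ℂ) from rfl]
      rw [hmat]
      exact hsep'
  calc RG ((Ω ∘ₗ Λ) σ) ≤ s + s' + s * s' := hfinal
  _ ≤ ε + d + ε * d + η0 := by
      have hmul : s * s' ≤ (d + η) * (ε + η) :=
        mul_le_mul hslt.le hs'lt.le hs'0 (by linarith)
      nlinarith [hηpos, hη1, hη3, hmul]


end
end

section
/- For every separable state σ on C^K ⊗ C^K, the fidelity with the maximally entangled state satisfies tr(Φ(K)σ) ≤ 1/K. -/
open Matrix Kronecker ComplexOrder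

noncomputable section

lemma psd_diag_nonneg' {n : Type*} [Fintype n] [DecidableEq n] {M : Matrix n n ℂ}
    (hM : M.PosSemidef) (i : n) : 0 ≤ M i i := by
  exact hM.diag_nonneg (i := i)

lemma key_trace_le' {n : Type*} [Fintype n] [DecidableEq n] {A C : Matrix n n ℂ}
    (hA : A.PosSemidef) (hC : C.PosSemidef) (htA : A.trace = 1) (htC : C.trace = 1) :
    ((A * C).trace).re ≤ 1 := by
  have hCH := hC.1
  set U : Matrix n n ℂ := (hCH.eigenvectorUnitary : Matrix n n ℂ) with hU
  set D : Matrix n n ℂ := diagonal (RCLike.ofReal ∘ hCH.eigenvalues) with hD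
  have hspec : C = U * D * star U := hCH.spectral_theorem
  set M : Matrix n n ℂ := star U * A * U with hM
  have hUU : star U * U = 1 := Unitary.coe_star_mul_self hCH.eigenvectorUnitary
  have hUU' : U * star U = 1 := Unitary.coe_mul_star_self hCH.eigenvectorUnitary
  have hMpsd : M.PosSemidef := by
    have := hA.mul_mul_conjTranspose_same (star U)
    simpa [hM, star_eq_conjTranspose, conjTranspose_conjTranspose] using this
  have htM : M.trace = 1 := by
    rw [hM, trace_mul_cycle, hUU', one_mul, htA]
  have htr : (A * C).trace = (M * D).trace := by
    rw [hspec, hM, ← mul_assoc, trace_mul_comm]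
    simp only [← mul_assoc]
  have hev : ∀ i, 0 ≤ hCH.eigenvalues i := hC.eigenvalues_nonneg
  have hsum : ∑ i, hCH.eigenvalues i = 1 := by
    have : D.trace = 1 := by
      rw [show D.trace = C.trace by rw [hspec, trace_mul_cycle, hUU, one_mul], htC]
    have := congrArg Complex.re this
    simpa [hD, trace_diagonal, Complex.ofReal_sum (Finset.univ) hCH.eigenvalues] using this
  have hMd : ∀ i, 0 ≤ (M i i).re := fun i => (Complex.nonneg_iff.1 (psd_diag_nonneg' hMpsd i)).1
  have hMsum : ∑ i, (M i i).re = 1 := by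
    have := congrArg Complex.re htM
    simpa [Matrix.trace, Matrix.diag, Complex.re_sum] using this
  have hMle : ∀ i, (M i i).re ≤ 1 := by
    intro i
    rw [← hMsum]
    exact Finset.single_le_sum (fun j _ => hMd j) (Finset.mem_univ i)
  have : ((M * D).trace).re = ∑ i, (M i i).re * hCH.eigenvalues i := by
    simp [Matrix.trace, Matrix.diag, mul_apply, hD, diagonal_apply, Complex.re_sum,
      Finset.sum_ite_eq, Complex.mul_re]
  rw [htr, this, ← hsum]
  apply Finset.sum_le_sum
  intro i _
  calc (M i i).re * hCH.eigenvalues i ≤ 1 * hCH.eigenvalues i :=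
        mul_le_mul_of_nonneg_right (hMle i) (hev i)
    _ = hCH.eigenvalues i := one_mul _

lemma trace_maxEnt_kron' (K : ℕ) (A B : Matrix (Fin K) (Fin K) ℂ) :
    (maxEnt (Fin K) * (A ⊗ₖ B)).trace = (K : ℂ)⁻¹ * (A * Bᵀ).trace := by
  simp [Matrix.trace, Matrix.diag, mul_apply, maxEnt, Fintype.sum_prod_type, ite_and,
    kroneckerMap_apply, Finset.mul_sum, apply_ite, transpose_apply]
  rw [Finset.sum_comm]

/-- every separable state σ on C^K ⊗ C^K satisfies tr(Φ(K)σ) ≤ 1/K. -/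
theorem stmt_7 (K : ℕ) (hK : 1 ≤ K)
    (σ : Matrix (Fin K × Fin K) (Fin K × Fin K) ℂ)
    (hσ : IsState σ) (hsep : SepState σ) :
    ((maxEnt (Fin K) * σ).trace).re ≤ 1 / K := by
  obtain ⟨k, p, A, B, hp, hpsum, hA, hB, hσeq⟩ := hsep
  subst hσeq
  have hexp : (maxEnt (Fin K) * ∑ i, (p i : ℂ) • (A i ⊗ₖ B i)).trace
      = ∑ i, (p i : ℂ) * ((K : ℂ)⁻¹ * (A i * (B i)ᵀ).trace) := by
    rw [Finset.mul_sum, trace_sum]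
    refine Finset.sum_congr rfl fun i _ => ?_
    rw [mul_smul_comm, trace_smul, trace_maxEnt_kron' K (A i) (B i), smul_eq_mul]
  have hre : ∀ i : Fin k, ((p i : ℂ) * ((K : ℂ)⁻¹ * (A i * (B i)ᵀ).trace)).re
      = p i * ((K : ℝ)⁻¹ * ((A i * (B i)ᵀ).trace).re) := by
    intro i
    rw [show ((K : ℂ))⁻¹ = (((K : ℝ)⁻¹ : ℝ) : ℂ) by push_cast; ring]
    rw [← mul_assoc, ← Complex.ofReal_mul, Complex.re_ofReal_mul, mul_assoc]
  have hbound : ∀ i : Fin k, ((A i * (B i)ᵀ).trace).re ≤ 1 := by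
    intro i
    exact key_trace_le' (hA i).1 ((hB i).1.transpose) (hA i).2
      (by rw [trace_transpose]; exact (hB i).2)
  have hKinv : (0:ℝ) ≤ (K:ℝ)⁻¹ := by positivity
  rw [hexp, Complex.re_sum]
  calc ∑ i, ((p i : ℂ) * ((K : ℂ)⁻¹ * (A i * (B i)ᵀ).trace)).re
      = ∑ i, p i * ((K : ℝ)⁻¹ * ((A i * (B i)ᵀ).trace).re) :=
        Finset.sum_congr rfl fun i _ => hre i
    _ ≤ ∑ i, p i * ((K : ℝ)⁻¹ * 1) := by
        exact Finset.sum_le_sum fun i _ => mul_le_mul_of_nonneg_left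
          (mul_le_mul_of_nonneg_left (hbound i) hKinv) (hp i)
    _ = (K:ℝ)⁻¹ * ∑ i, p i := by rw [← Finset.sum_mul, mul_one]; ring
    _ = 1 / K := by rw [hpsum, mul_one, one_div]

end
end

section
/- Let ρ_n, π_n be states on a bipartite space with (ρ_n + (K−1)π_n)/K separable, and define the measure-and-prepare map Λ(A) = tr(A Φ(K)) ρ_n + tr(A (Id − Φ(K))) π_n on states of C^K ⊗ C^K. Then Λ is CPTP and for every separable input state σ, R_G(Λ(σ)) ≤ 1/(K−1). -/
open Matrix Kronecker ComplexOrder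

noncomputable section

section AuxLemmas

lemma maxEnt_herm {K : ℕ} : (maxEnt (Fin K)).IsHermitian := by
  unfold Matrix.IsHermitian
  ext p q
  simp [maxEnt, Matrix.conjTranspose_apply, and_comm]
  split_ifs <;> simp

lemma maxEnt_idem {K : ℕ} : maxEnt (Fin K) * maxEnt (Fin K) = maxEnt (Fin K) := by
  ext p q
  simp only [Matrix.mul_apply, maxEnt, Matrix.of_apply, Fintype.sum_prod_type, ite_mul, zero_mul,
    mul_ite, mul_zero]
  by_cases h1 : p.1 = p.2 <;> by_cases h2 : q.1 = q.2 <;>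
    simp [h1, h2, Finset.sum_ite_eq, Fintype.card_fin]
  field_simp

lemma trace_cms {n : Type*} [Fintype n] (M : Matrix n n ℂ) :
    (Mᴴ * M).trace = ((∑ j, ∑ i, Complex.normSq (M i j) : ℝ) : ℂ) := by
  simp only [Matrix.trace, Matrix.diag, Matrix.mul_apply, Matrix.conjTranspose_apply]
  push_cast
  refine Finset.sum_congr rfl fun j _ => Finset.sum_congr rfl fun i _ => ?_
  rw [← Complex.mul_conj, mul_comm]
  rfl

lemma psd_smul_real {n : Type*} [Fintype n] {A : Matrix n n ℂ} (hA : A.PosSemidef)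
    {c : ℝ} (hc : 0 ≤ c) : ((c : ℂ) • A).PosSemidef := by
  constructor
  · unfold Matrix.IsHermitian
    rw [Matrix.conjTranspose_smul, hA.1.eq]
    norm_num
  · intro x
    exact (hA.smul (a := (c : ℂ)) (Complex.zero_le_real.mpr hc)).2 x

lemma trace_mul_psd_le {n : Type*} [Fintype n] [DecidableEq n]
    {X Y : Matrix n n ℂ} (hX : X.PosSemidef) (hY : Y.PosSemidef) :
    ∃ r : ℝ, (X * Y).trace = (r : ℂ) ∧ 0 ≤ r ∧ r ≤ X.trace.re * Y.trace.re := by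
  have hsq : ∀ {Z : Matrix n n ℂ}, Z.PosSemidef → ∃ M : Matrix n n ℂ, Z = Mᴴ * M := by
    open scoped MatrixOrder in
    intro Z hZ
    exact ⟨CFC.sqrt Z, by rw [← Matrix.star_eq_conjTranspose,
      (CFC.sqrt_nonneg Z).isSelfAdjoint.star_eq, CFC.sqrt_mul_sqrt_self Z hZ.nonneg]⟩
  obtain ⟨M, rfl⟩ := hsq hX
  obtain ⟨N, rfl⟩ := hsq hY
  have h1 : (Mᴴ * M * (Nᴴ * N)).trace = ((N * Mᴴ)ᴴ * (N * Mᴴ)).trace := by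
    rw [Matrix.conjTranspose_mul, Matrix.conjTranspose_conjTranspose, Matrix.mul_assoc,
      Matrix.trace_mul_comm]
    congr 1
    noncomm_ring
  refine ⟨∑ j, ∑ i, Complex.normSq ((N * Mᴴ) i j), by rw [h1, trace_cms], ?_, ?_⟩
  · exact Finset.sum_nonneg fun j _ => Finset.sum_nonneg fun i _ => Complex.normSq_nonneg _
  · rw [trace_cms M, trace_cms N, Complex.ofReal_re, Complex.ofReal_re]
    have key : ∀ i j, Complex.normSq ((N * Mᴴ) i j) ≤
        (∑ k, Complex.normSq (N i k)) * (∑ k, Complex.normSq (M j k)) := by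
      intro i j
      have h2 : ‖(N * Mᴴ) i j‖ ≤ ∑ k, ‖N i k‖ * ‖M j k‖ := by
        rw [Matrix.mul_apply]
        refine (norm_sum_le _ _).trans ?_
        refine Finset.sum_le_sum fun k _ => ?_
        simp [Matrix.conjTranspose_apply]
      have h3 := Finset.sum_mul_sq_le_sq_mul_sq Finset.univ (fun k => ‖N i k‖)
        (fun k => ‖M j k‖)
      calc Complex.normSq ((N * Mᴴ) i j) = ‖(N * Mᴴ) i j‖ ^ 2 := by
            rw [Complex.sq_norm]
        _ ≤ (∑ k, ‖N i k‖ * ‖M j k‖) ^ 2 := by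
            apply pow_le_pow_left₀ (norm_nonneg _) h2
        _ ≤ (∑ k, ‖N i k‖ ^ 2) * (∑ k, ‖M j k‖ ^ 2) := h3
        _ = (∑ k, Complex.normSq (N i k)) * (∑ k, Complex.normSq (M j k)) := by
            simp [Complex.sq_norm]
    calc ∑ j, ∑ i, Complex.normSq ((N * Mᴴ) i j)
        ≤ ∑ j, ∑ i, (∑ k, Complex.normSq (N i k)) * (∑ k, Complex.normSq (M j k)) :=
          Finset.sum_le_sum fun j _ => Finset.sum_le_sum fun i _ => key i j
      _ = (∑ i, ∑ k, Complex.normSq (N i k)) * (∑ j, ∑ k, Complex.normSq (M j k)) := by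
          rw [Finset.sum_comm, ← Finset.sum_mul_sum]
      _ = (∑ j, ∑ i, Complex.normSq (M i j)) * (∑ j, ∑ i, Complex.normSq (N i j)) := by
          rw [mul_comm]
          congr 1 <;> exact Finset.sum_comm

lemma trace_kron_maxEnt {K : ℕ} (A B : Matrix (Fin K) (Fin K) ℂ) :
    ((A ⊗ₖ B) * maxEnt (Fin K)).trace = ((K : ℂ))⁻¹ * (A * Bᵀ).trace := by
  simp only [Matrix.trace, Matrix.diag, Matrix.mul_apply, maxEnt, Matrix.of_apply,
    Fintype.sum_prod_type, Matrix.kroneckerMap_apply, Matrix.transpose_apply,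
    mul_ite, mul_zero, Fintype.card_fin]
  rw [Finset.mul_sum]
  refine Finset.sum_congr rfl fun a _ => ?_
  rw [Finset.mul_sum]
  simp only [ite_and, Finset.sum_ite_eq, Finset.sum_ite_eq', Finset.mem_univ, if_true]
  rw [Finset.sum_comm]
  simp [mul_comm, mul_assoc, mul_left_comm]

lemma sep_trace_maxEnt {K : ℕ} (hK : 0 < K) {σ : Matrix (Fin K × Fin K) (Fin K × Fin K) ℂ}
    (hσ : SepState σ) :
    ∃ r : ℝ, (σ * maxEnt (Fin K)).trace = (r : ℂ) ∧ 0 ≤ r ∧ (K : ℝ) * r ≤ 1 := by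
  obtain ⟨k, p, A, B, hp0, hp1, hA, hB, rfl⟩ := hσ
  have each : ∀ i, ∃ r : ℝ, ((A i) * (B i)ᵀ).trace = (r : ℂ) ∧ 0 ≤ r ∧ r ≤ 1 := by
    intro i
    obtain ⟨r, h1, h2, h3⟩ := trace_mul_psd_le (hA i).1 (hB i).1.transpose
    refine ⟨r, h1, h2, h3.trans_eq ?_⟩
    rw [Matrix.trace_transpose, (hA i).2, (hB i).2]
    norm_num
  choose r hr hr0 hr1 using each
  refine ⟨(K : ℝ)⁻¹ * ∑ i, p i * r i, ?_, ?_, ?_⟩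
  · rw [Finset.sum_mul, Matrix.trace_sum]
    push_cast
    rw [Finset.mul_sum]
    refine Finset.sum_congr rfl fun i _ => ?_
    rw [Matrix.smul_mul, Matrix.trace_smul, trace_kron_maxEnt, hr i]
    rw [smul_eq_mul]
    push_cast
    ring
  · have : 0 ≤ ∑ i, p i * r i := Finset.sum_nonneg fun i _ => mul_nonneg (hp0 i) (hr0 i)
    positivity
  · have hKR : (0:ℝ) < K := by exact_mod_cast hK
    rw [← mul_assoc, mul_inv_cancel₀ hKR.ne', one_mul]
    calc ∑ i, p i * r i ≤ ∑ i, p i := Finset.sum_le_sum fun i _ => by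
          nlinarith [hp0 i, hr0 i, hr1 i]
      _ = 1 := hp1

lemma kraus_sum_one {d n : Type*} [Fintype d] [Fintype n] [DecidableEq d] [DecidableEq n]
    (S : Matrix n n ℂ) (B : Matrix d d ℂ) (A : Matrix d d ℂ) :
    ∑ l : n, ∑ m : d,
      (Matrix.of fun i q => S i l * B m q) * A * (Matrix.of fun i q => S i l * B m q)ᴴ
      = (B * A * Bᴴ).trace • (S * Sᴴ) := by
  ext i j
  simp only [Matrix.sum_apply, Matrix.smul_apply, Matrix.mul_apply,
    Matrix.conjTranspose_apply, Matrix.of_apply, Matrix.trace, Matrix.diag, star_mul',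
    smul_eq_mul]
  calc ∑ l, ∑ m, ∑ q', (∑ q, S i l * B m q * A q q') * (star (S j l) * star (B m q'))
      = ∑ l, ∑ m, (S i l * star (S j l)) * ∑ q', (∑ q, B m q * A q q') * star (B m q') := by
        refine Finset.sum_congr rfl fun l _ => Finset.sum_congr rfl fun m _ => ?_
        rw [Finset.mul_sum]
        refine Finset.sum_congr rfl fun q' _ => ?_
        rw [Finset.sum_mul, Finset.sum_mul, Finset.mul_sum]
        refine Finset.sum_congr rfl fun q _ => ?_
        ring
    _ = (∑ l, S i l * star (S j l)) * ∑ m, ∑ q', (∑ q, B m q * A q q') * star (B m q') := by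
        rw [Finset.sum_mul_sum]
    _ = (∑ m, ∑ q', (∑ q, B m q * A q q') * star (B m q')) * ∑ l, S i l * star (S j l) := by
        ring

lemma kraus_sum_two {d n : Type*} [Fintype d] [Fintype n] [DecidableEq d] [DecidableEq n]
    (S : Matrix n n ℂ) (B : Matrix d d ℂ) :
    ∑ l : n, ∑ m : d,
      (Matrix.of fun i q => S i l * B m q)ᴴ * (Matrix.of fun i q => S i l * B m q)
      = (Sᴴ * S).trace • (Bᴴ * B) := by
  ext q q'
  simp only [Matrix.sum_apply, Matrix.smul_apply, Matrix.mul_apply,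
    Matrix.conjTranspose_apply, Matrix.of_apply, Matrix.trace, Matrix.diag, star_mul',
    smul_eq_mul]
  calc ∑ l, ∑ m, ∑ i, (star (S i l) * star (B m q)) * (S i l * B m q')
      = ∑ l, ∑ m, (∑ i, star (S i l) * S i l) * (star (B m q) * B m q') := by
        refine Finset.sum_congr rfl fun l _ => Finset.sum_congr rfl fun m _ => ?_
        rw [Finset.sum_mul]
        refine Finset.sum_congr rfl fun i _ => ?_
        ring
    _ = (∑ l, ∑ i, star (S i l) * S i l) * (∑ m, star (B m q) * B m q') := by
        rw [Finset.sum_mul_sum]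
    _ = (∑ l, ∑ i, star (S i l) * S i l) * ∑ m, star (B m q) * B m q' := rfl


lemma kraus_sum_one' {d n : Type*} [Fintype d] [Fintype n] [DecidableEq d] [DecidableEq n]
    (S : Matrix n n ℂ) (B : Matrix d d ℂ) (A : Matrix d d ℂ) :
    ∑ t : n × d,
      (Matrix.of fun i q => S i t.1 * B t.2 q) * A * (Matrix.of fun i q => S i t.1 * B t.2 q)ᴴ
      = (B * A * Bᴴ).trace • (S * Sᴴ) := by
  rw [Fintype.sum_prod_type]
  exact kraus_sum_one S B A

lemma kraus_sum_two' {d n : Type*} [Fintype d] [Fintype n] [DecidableEq d] [DecidableEq n]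
    (S : Matrix n n ℂ) (B : Matrix d d ℂ) :
    ∑ t : n × d,
      (Matrix.of fun i q => S i t.1 * B t.2 q)ᴴ * (Matrix.of fun i q => S i t.1 * B t.2 q)
      = (Sᴴ * S).trace • (Bᴴ * B) := by
  rw [Fintype.sum_prod_type]
  exact kraus_sum_two S B

end AuxLemmas

/-- the measure-and-prepare map Λ(A) = tr(AΦ(K))ρ + tr(A(Id−Φ(K)))π is
CPTP and 1/(K−1)-non-entangling, given (ρ + (K−1)π)/K separable. -/
theorem stmt_9 {α β : Type*} [Fintype α] [DecidableEq α] [Fintype β] [DecidableEq β]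
    (K : ℕ) (hK : 2 ≤ K)
    (ρ π : Matrix (α × β) (α × β) ℂ) (hρ : IsState ρ) (hπ : IsState π)
    (hsep : SepState ((((K : ℝ)⁻¹ : ℝ) : ℂ) • (ρ + (((K : ℝ) - 1 : ℝ) : ℂ) • π)))
    (Λ : Matrix (Fin K × Fin K) (Fin K × Fin K) ℂ →ₗ[ℂ] Matrix (α × β) (α × β) ℂ)
    (hΛ : ∀ A, Λ A = (A * maxEnt (Fin K)).trace • ρ + (A * (1 - maxEnt (Fin K))).trace • π) :
    IsCPTP Λ ∧ ∀ σ, IsState σ → SepState σ → RG (Λ σ) ≤ 1 / ((K : ℝ) - 1) := by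
  have hK0 : 0 < K := by omega
  have hΦh : (maxEnt (Fin K)).IsHermitian := maxEnt_herm
  have hΦi : maxEnt (Fin K) * maxEnt (Fin K) = maxEnt (Fin K) := maxEnt_idem
  set Φ := maxEnt (Fin K) with hΦdef
  have hBh : (1 - Φ)ᴴ = 1 - Φ := by
    rw [Matrix.conjTranspose_sub, Matrix.conjTranspose_one, hΦh.eq]
  have hBi : (1 - Φ) * (1 - Φ) = 1 - Φ := by
    rw [Matrix.mul_sub, Matrix.mul_one, Matrix.sub_mul, Matrix.one_mul, hΦi]
    abel
  constructor
  · -- CPTP part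
    obtain ⟨hρp, hρt⟩ := hρ
    obtain ⟨hπp, hπt⟩ := hπ
    open scoped MatrixOrder in
    set S1 := CFC.sqrt ρ with hS1def
    open scoped MatrixOrder in
    set S2 := CFC.sqrt π with hS2def
    have hS1h : S1ᴴ = S1 := by open scoped MatrixOrder in exact (CFC.sqrt_nonneg ρ).isSelfAdjoint
    have hS2h : S2ᴴ = S2 := by open scoped MatrixOrder in exact (CFC.sqrt_nonneg π).isSelfAdjoint
    have hρsq : S1 * S1 = ρ := by open scoped MatrixOrder in exact CFC.sqrt_mul_sqrt_self ρ hρp.nonneg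
    have hπsq : S2 * S2 = π := by open scoped MatrixOrder in exact CFC.sqrt_mul_sqrt_self π hπp.nonneg
    have hS1m : S1 * S1ᴴ = ρ := by rw [hS1h, hρsq]
    have hS2m : S2 * S2ᴴ = π := by rw [hS2h, hπsq]
    have hS1t : (S1ᴴ * S1).trace = 1 := by rw [hS1h, hρsq, hρt]
    have hS2t : (S2ᴴ * S2).trace = 1 := by rw [hS2h, hπsq, hπt]
    set J := (Fin 2 × ((α × β) × (Fin K × Fin K))) with hJdef
    set Kr : J → Matrix (α × β) (Fin K × Fin K) ℂ := fun t =>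
      Matrix.of fun i q =>
        (if t.1 = 0 then S1 else S2) i t.2.1 * (if t.1 = 0 then Φ else 1 - Φ) t.2.2 q
      with hKrdef
    set e : J ≃ Fin (Fintype.card J) := Fintype.equivFin J with hedef
    refine ⟨Fintype.card J, fun i => Kr (e.symm i), fun X => ?_, ?_⟩
    · have heq : (∑ i, Kr (e.symm i) * X * (Kr (e.symm i))ᴴ)
          = ∑ t : J, Kr t * X * (Kr t)ᴴ :=
        Fintype.sum_equiv e.symm _ _ (fun i => rfl)
      rw [heq, Fintype.sum_prod_type, Fin.sum_univ_two]
      have h0 : ∀ b : (α × β) × (Fin K × Fin K),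
          Kr (0, b) = Matrix.of fun i q => S1 i b.1 * Φ b.2 q := fun b => by
        simp [hKrdef]
      have h1 : ∀ b : (α × β) × (Fin K × Fin K),
          Kr (1, b) = Matrix.of fun i q => S2 i b.1 * (1 - Φ) b.2 q := fun b => by
        simp [hKrdef]
      simp only [h0, h1]
      rw [kraus_sum_one', kraus_sum_one', hS1m, hS2m, hΦh.eq, hBh]
      have t1 : (Φ * X * Φ).trace = (X * Φ).trace := by
        rw [Matrix.trace_mul_cycle, hΦi, Matrix.trace_mul_comm]
      have t2 : ((1 - Φ) * X * (1 - Φ)).trace = (X * (1 - Φ)).trace := by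
        rw [Matrix.trace_mul_cycle, hBi, Matrix.trace_mul_comm]
      rw [t1, t2, hΛ X]
    · have heq : (∑ i, (Kr (e.symm i))ᴴ * Kr (e.symm i))
          = ∑ t : J, (Kr t)ᴴ * Kr t :=
        Fintype.sum_equiv e.symm _ _ (fun i => rfl)
      rw [heq, Fintype.sum_prod_type, Fin.sum_univ_two]
      have h0 : ∀ b : (α × β) × (Fin K × Fin K),
          Kr (0, b) = Matrix.of fun i q => S1 i b.1 * Φ b.2 q := fun b => by
        simp [hKrdef]
      have h1 : ∀ b : (α × β) × (Fin K × Fin K),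
          Kr (1, b) = Matrix.of fun i q => S2 i b.1 * (1 - Φ) b.2 q := fun b => by
        simp [hKrdef]
      simp only [h0, h1]
      rw [kraus_sum_two', kraus_sum_two', hS1t, hS2t, hΦh.eq, hBh, one_smul, one_smul, hΦi, hBi]
      abel
  · -- non-entangling part
    intro σ hσ hσsep
    obtain ⟨r, hrtr, hr0, hrK⟩ := sep_trace_maxEnt hK0 hσsep
    have hK2 : (2:ℝ) ≤ (K:ℝ) := by exact_mod_cast hK
    have hKm1 : (0:ℝ) < (K:ℝ) - 1 := by linarith
    have hrm : (K:ℝ) * r ≤ 1 := hrK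
    have hc1 : (0:ℝ) ≤ 1 - ((K:ℝ) - 1) * r := by nlinarith
    have hc2 : (0:ℝ) ≤ ((K:ℝ) - 1) * r := mul_nonneg (by linarith) hr0
    set π' : Matrix (α × β) (α × β) ℂ :=
      ((1 - ((K:ℝ) - 1) * r : ℝ) : ℂ) • ρ + ((((K:ℝ) - 1) * r : ℝ) : ℂ) • π with hπ'def
    have hπ'state : IsState π' := by
      constructor
      · exact (psd_smul_real hρ.1 hc1).add (psd_smul_real hπ.1 hc2)
      · rw [hπ'def, Matrix.trace_add, Matrix.trace_smul, Matrix.trace_smul, hρ.2, hπ.2,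
          smul_eq_mul, smul_eq_mul, mul_one, mul_one]
        push_cast
        ring
    have htr2 : (σ * (1 - Φ)).trace = 1 - (r : ℂ) := by
      rw [Matrix.mul_sub, Matrix.mul_one, Matrix.trace_sub, hσ.2, hrtr]
    have hmat : (((1 + 1 / ((K : ℝ) - 1))⁻¹ : ℝ) : ℂ) •
          (Λ σ + ((1 / ((K : ℝ) - 1) : ℝ) : ℂ) • π')
        = (((K : ℝ)⁻¹ : ℝ) : ℂ) • (ρ + (((K : ℝ) - 1 : ℝ) : ℂ) • π) := by
      rw [hΛ σ, hrtr, htr2, hπ'def]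
      have hKC : ((K:ℝ) : ℂ) - 1 ≠ 0 := by
        intro h
        have : ((K:ℝ) : ℂ) = 1 := by linear_combination h
        have : (K:ℝ) = 1 := by exact_mod_cast this
        linarith
      have hKC0 : ((K:ℝ) : ℂ) ≠ 0 := by
        intro h
        have : (K:ℝ) = 0 := by exact_mod_cast h
        linarith
      have hstep : (1 + 1 / ((K:ℝ) - 1) : ℝ) = (K:ℝ) / ((K:ℝ) - 1) := by
        field_simp
        ring
      rw [hstep, inv_div]
      have hKC2 : ((K:ℂ)) ≠ 0 := Nat.cast_ne_zero.mpr (by omega)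
      have hKC3 : ((K:ℂ) - 1) ≠ 0 := by
        intro h
        have h1 : ((K:ℕ):ℂ) = ((1:ℕ):ℂ) := by push_cast; linear_combination h
        have h2 : K = 1 := Nat.cast_injective h1
        omega
      match_scalars <;> push_cast <;> field_simp [hKC2, hKC3] <;> ring
    unfold RG
    apply csInf_le
    · exact ⟨0, fun x hx => hx.1⟩
    · refine ⟨by positivity, π', hπ'state, ?_⟩
      rw [hmat]
      exact hsep

end
end
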